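/- Let E and F be pseudo-normed real vector spaces, let s_0 < s < s_1 be real numbers, q ∈ [1,∞], r > 0, and let Φ : B_{s,q}(0,r) → Σ^{s_0}_∞(F) satisfy the weak Lipschitz and tame estimates. Then for every v ∈ B_{s,q}(0,r), the sequence Φ(v) belongs to Σ^s_q(F), i.e. ‖Φ(v)‖_{Σ^s_q(F)} < ∞ (and, when q = ∞, 2^{ks}‖(Φ(v))_k‖_F → 0 as k → ∞). -/

import Mathlib

open Filter
open scoped ENNReal NNReal

/-- A pseudo-norm on a real vector space: nonnegative, symmetric, subadditive,
and vanishing exactly at `0`. -/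
structure IsPseudoNorm {E : Type*} [AddCommGroup E] [Module ℝ E] (N : E → ℝ) : Prop where
  nonneg : ∀ x, 0 ≤ N x
  neg : ∀ x, N (-x) = N x
  add_le : ∀ x y, N (x + y) ≤ N x + N y
  eq_zero_iff : ∀ x, N x = 0 ↔ x = 0

/-- The `Σ^s_q(E)` pseudo-norm of a sequence `f : ℕ → E`:
`(∑_k 2^{qks} ‖f_k‖_E^q)^{1/q}` for `q < ∞` and `sup_k 2^{ks} ‖f_k‖_E` for `q = ∞`. -/
noncomputable def sigmaNorm {E : Type*} (N : E → ℝ) (s : ℝ) (q : ℝ≥0∞) (f : ℕ → E) : ℝ≥0∞ :=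
  if q = ⊤ then ⨆ k : ℕ, ENNReal.ofReal ((2 : ℝ) ^ ((k : ℝ) * s) * N (f k))
  else (∑' k : ℕ, ENNReal.ofReal ((2 : ℝ) ^ ((k : ℝ) * s) * N (f k)) ^ q.toReal) ^ (1 / q.toReal)

/-- Membership in `Σ^s_q(E)`: finiteness of the norm when `q < ∞`, and
`2^{ks}‖f_k‖_E → 0` when `q = ∞`. -/
def memSigma {E : Type*} (N : E → ℝ) (s : ℝ) (q : ℝ≥0∞) (f : ℕ → E) : Prop :=
  if q = ⊤ then Tendsto (fun k : ℕ => (2 : ℝ) ^ ((k : ℝ) * s) * N (f k)) atTop (nhds 0)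
  else sigmaNorm N s q f < ⊤

/-- Friedrichs smoothing operator `S_n`: truncation of a sequence after index `n`. -/
def smoothS {E : Type*} [Zero E] (n : ℕ) (f : ℕ → E) : ℕ → E :=
  fun k => if k ≤ n then f k else 0

section Aux

lemma tsum_ite_pow_le (t : ℝ≥0∞) (P : ℕ → Prop) [DecidablePred P] (e : ℕ → ℕ)
    (he : ∀ a b, P a → P b → e a = e b → a = b) :
    ∑' k : ℕ, (if P k then t ^ (e k) else 0) ≤ (1 - t)⁻¹ := by
  rw [← ENNReal.tsum_geometric, ENNReal.tsum_eq_iSup_sum]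
  refine iSup_le fun s => ?_
  rw [← Finset.sum_filter]
  rw [← Finset.sum_image (f := fun m => t ^ m) (g := e)
    (fun a ha b hb hab => he a b (Finset.mem_filter.1 ha).2 (Finset.mem_filter.1 hb).2 hab)]
  exact ENNReal.sum_le_tsum _

lemma tsum_mul_le_holder {p p' : ℝ} (hpq : Real.HolderConjugate p p') (f g : ℕ → ℝ≥0∞) :
    ∑' k, f k * g k ≤ (∑' k, f k ^ p) ^ (1/p) * (∑' k, g k ^ p') ^ (1/p') := by
  have := ENNReal.lintegral_mul_le_Lp_mul_Lq (MeasureTheory.Measure.count (α := ℕ)) hpq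
    (measurable_from_nat (f := f)).aemeasurable (measurable_from_nat (f := g)).aemeasurable
  simpa [MeasureTheory.lintegral_count] using this

lemma schur_bound (K : ℕ → ℕ → ℝ≥0∞) (A : ℕ → ℝ≥0∞) (M : ℝ≥0∞)
    (hM0 : M ≠ 0) (hMt : M ≠ ⊤) {p : ℝ} (hp : 1 ≤ p)
    (hrow : ∀ n, ∑' k, K n k ≤ M) (hcol : ∀ k, ∑' n, K n k ≤ M) :
    ∑' n, (∑' k, K n k * A k) ^ p ≤ M ^ p * ∑' k, A k ^ p := by
  have hp0 : 0 < p := lt_of_lt_of_le one_pos hp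
  have key : ∀ n, (∑' k, K n k * A k) ^ p ≤ M ^ (p - 1) * ∑' k, K n k * A k ^ p := by
    intro n
    rcases eq_or_lt_of_le hp with h1 | h1
    · simp only [← h1, ENNReal.rpow_one, sub_self, ENNReal.rpow_zero, one_mul]
      exact le_rfl
    · have hpq : Real.HolderConjugate p (p / (p - 1)) := Real.HolderConjugate.conjExponent h1
      have hmain : ∑' k, K n k * A k
          ≤ (∑' k, K n k * A k ^ p) ^ (1/p) * M ^ (1/(p/(p-1))) := by
        calc ∑' k, K n k * A k
            = ∑' k, (K n k ^ (1/p) * A k) * (K n k ^ (1/(p/(p-1)))) := by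
              refine tsum_congr fun k => ?_
              rw [mul_right_comm, ← ENNReal.rpow_add_of_nonneg _ _ hpq.one_div_nonneg
                hpq.symm.one_div_nonneg, one_div, one_div, hpq.inv_add_inv_eq_inv, inv_one,
                ENNReal.rpow_one]
          _ ≤ (∑' k, (K n k ^ (1/p) * A k) ^ p) ^ (1/p)
              * (∑' k, (K n k ^ (1/(p/(p-1)))) ^ (p/(p-1))) ^ (1/(p/(p-1))) :=
              tsum_mul_le_holder hpq _ _
          _ = (∑' k, K n k * A k ^ p) ^ (1/p) * (∑' k, K n k) ^ (1/(p/(p-1))) := by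
              congr 2
              · refine tsum_congr fun k => ?_
                rw [ENNReal.mul_rpow_of_nonneg _ _ hp0.le, ← ENNReal.rpow_mul,
                  one_div_mul_cancel hp0.ne', ENNReal.rpow_one]
              · refine tsum_congr fun k => ?_
                rw [← ENNReal.rpow_mul, one_div_mul_cancel hpq.symm.ne_zero, ENNReal.rpow_one]
          _ ≤ (∑' k, K n k * A k ^ p) ^ (1/p) * M ^ (1/(p/(p-1))) :=
              mul_le_mul_right (ENNReal.rpow_le_rpow (hrow n) hpq.symm.one_div_nonneg) _
      calc (∑' k, K n k * A k) ^ p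
          ≤ (((∑' k, K n k * A k ^ p) ^ (1/p)) * M ^ (1/(p/(p-1)))) ^ p :=
            ENNReal.rpow_le_rpow hmain hp0.le
        _ = M ^ (p - 1) * ∑' k, K n k * A k ^ p := by
            rw [ENNReal.mul_rpow_of_nonneg _ _ hp0.le, ← ENNReal.rpow_mul, ← ENNReal.rpow_mul,
              one_div_mul_cancel hp0.ne', ENNReal.rpow_one, mul_comm]
            congr 2
            rw [one_div, inv_mul_eq_div, hpq.div_conj_eq_sub_one]
  calc ∑' n, (∑' k, K n k * A k) ^ p
      ≤ ∑' n, M ^ (p - 1) * ∑' k, K n k * A k ^ p := ENNReal.tsum_le_tsum key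
    _ = M ^ (p - 1) * ∑' k, (∑' n, K n k) * A k ^ p := by
        rw [ENNReal.tsum_mul_left]
        congr 1
        rw [ENNReal.tsum_comm]
        exact tsum_congr fun k => ENNReal.tsum_mul_right
    _ ≤ M ^ (p - 1) * ∑' k, M * A k ^ p :=
        mul_le_mul_right (ENNReal.tsum_le_tsum fun k => mul_le_mul_left (hcol k) _) _
    _ = M ^ (p - 1) * (M * ∑' k, A k ^ p) := by rw [ENNReal.tsum_mul_left]
    _ = (M ^ (p - 1) * M ^ (1:ℝ)) * ∑' k, A k ^ p := by rw [ENNReal.rpow_one]; ring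
    _ = M ^ p * ∑' k, A k ^ p := by
        rw [← ENNReal.rpow_add _ _ hM0 hMt]
        ring_nf

lemma tendsto_kernel (K : ℕ → ℕ → ℝ≥0∞) (A : ℕ → ℝ≥0∞) (M S : ℝ≥0∞)
    (hM : M ≠ ⊤) (hS : S ≠ ⊤)
    (hrow : ∀ n, ∑' k, K n k ≤ M)
    (hcol : ∀ k, Tendsto (fun n => K n k) atTop (nhds 0))
    (hAb : ∀ k, A k ≤ S)
    (hA : Tendsto A atTop (nhds 0)) :
    Tendsto (fun n => ∑' k, K n k * A k) atTop (nhds 0) := by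
  rw [ENNReal.tendsto_nhds_zero]
  intro ε hε
  have hε2 : (0:ℝ≥0∞) < ε / 2 := ENNReal.half_pos hε.ne' |>.trans_le le_rfl
  set δ : ℝ≥0∞ := (ε / 2) / (M + 1) with hδ_def
  have hM1 : M + 1 ≠ ⊤ := by simp [hM]
  have hδ0 : 0 < δ := ENNReal.div_pos hε2.ne' hM1
  have hδM : δ * M ≤ ε / 2 := by
    calc δ * M ≤ δ * (M + 1) := mul_le_mul_right le_self_add δ
      _ = ε / 2 := ENNReal.div_mul_cancel (by simp) hM1
  obtain ⟨N, hN⟩ := eventually_atTop.1 (ENNReal.tendsto_nhds_zero.1 hA δ hδ0)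
  have hfin : Tendsto (fun n => ∑ k ∈ Finset.range N, K n k * A k) atTop (nhds 0) := by
    have := tendsto_finset_sum (Finset.range N)
      (fun k _ => (ENNReal.Tendsto.mul_const (hcol k)
        (Or.inr (lt_of_le_of_lt (hAb k) hS.lt_top).ne)))
    simpa using this
  obtain ⟨N', hN'⟩ := eventually_atTop.1 (ENNReal.tendsto_nhds_zero.1 hfin (ε/2) hε2)
  filter_upwards [eventually_ge_atTop N'] with n hn
  have hbound : ∀ k, K n k * A k ≤ (if k < N then K n k * A k else 0) + K n k * δ := by
    intro k
    by_cases hk : k < N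
    · simp only [if_pos hk]; exact le_self_add
    · simp only [if_neg hk, zero_add]
      exact mul_le_mul_right (hN k (Nat.le_of_not_lt hk)) _
  calc ∑' k, K n k * A k
      ≤ ∑' k, ((if k < N then K n k * A k else 0) + K n k * δ) := ENNReal.tsum_le_tsum hbound
    _ = (∑' k, (if k < N then K n k * A k else 0)) + ∑' k, K n k * δ := ENNReal.tsum_add
    _ = (∑ k ∈ Finset.range N, K n k * A k) + (∑' k, K n k) * δ := by
        rw [ENNReal.tsum_mul_right]
        congr 1
        rw [tsum_eq_sum (f := fun k => if k < N then K n k * A k else 0) (s := Finset.range N)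
          (fun k hk => if_neg (by simpa using hk))]
        exact Finset.sum_congr rfl fun k hk => if_pos (Finset.mem_range.1 hk)
    _ ≤ ε / 2 + δ * M := by
        refine add_le_add (hN' n hn) ?_
        rw [mul_comm]
        exact mul_le_mul_right (hrow n) δ
    _ ≤ ε / 2 + ε / 2 := add_le_add le_rfl hδM
    _ = ε := ENNReal.add_halves ε

lemma sigmaNorm_one_eq {E : Type*} (N : E → ℝ) (σ : ℝ) (f : ℕ → E) :
    sigmaNorm N σ 1 f = ∑' k : ℕ, ENNReal.ofReal ((2 : ℝ) ^ ((k : ℝ) * σ) * N (f k)) := by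
  simp [sigmaNorm]

lemma sigmaNorm_top_eq {E : Type*} (N : E → ℝ) (σ : ℝ) (f : ℕ → E) :
    sigmaNorm N σ ⊤ f = ⨆ k : ℕ, ENNReal.ofReal ((2 : ℝ) ^ ((k : ℝ) * σ) * N (f k)) := by
  simp [sigmaNorm]

lemma rpow_split₁ (s σ : ℝ) (n k : ℕ) (h : n ≤ k) :
    (2:ℝ) ^ ((n:ℝ) * (s - σ)) * ((2:ℝ) ^ ((k:ℝ) * σ)) =
      ((2:ℝ) ^ (σ - s)) ^ (k - n) * (2:ℝ) ^ ((k:ℝ) * s) := by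
  have h2 : (0:ℝ) < 2 := two_pos
  rw [← Real.rpow_natCast ((2:ℝ) ^ (σ - s)) (k - n), ← Real.rpow_mul h2.le,
    ← Real.rpow_add h2, ← Real.rpow_add h2]
  congr 1
  have hc : ((k - n : ℕ) : ℝ) = (k:ℝ) - (n:ℝ) := Nat.cast_sub h
  rw [hc]; ring

lemma rpow_split₂ (s σ : ℝ) (n k : ℕ) (h : k ≤ n) :
    (2:ℝ) ^ ((n:ℝ) * (s - σ)) * ((2:ℝ) ^ ((k:ℝ) * σ)) =
      ((2:ℝ) ^ (s - σ)) ^ (n - k) * (2:ℝ) ^ ((k:ℝ) * s) := by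
  have h2 : (0:ℝ) < 2 := two_pos
  rw [← Real.rpow_natCast ((2:ℝ) ^ (s - σ)) (n - k), ← Real.rpow_mul h2.le,
    ← Real.rpow_add h2, ← Real.rpow_add h2]
  congr 1
  have hc : ((n - k : ℕ) : ℝ) = (n:ℝ) - (k:ℝ) := Nat.cast_sub h
  rw [hc]; ring

end Aux

/-- Theorem 3.1 (interpolation part): if `Φ : B_{s,q}(0,r) ⊆ Σ^s_q(E) → Σ^{s₀}_∞(F)`
satisfies the weak Lipschitz estimate and the tame estimate, then `Φ(v) ∈ Σ^s_q(F)`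
for every `v ∈ B_{s,q}(0,r)` (finiteness of `‖Φ(v)‖_{Σ^s_q(F)}` for `q < ∞`, and
`2^{ks}‖(Φ(v))_k‖_F → 0` for `q = ∞`). -/
theorem interpolation_of_weakLipschitz_tame
    {E F : Type*} [AddCommGroup E] [Module ℝ E] [AddCommGroup F] [Module ℝ F]
    (NE : E → ℝ) (NF : F → ℝ) (hNE : IsPseudoNorm NE) (hNF : IsPseudoNorm NF)
    (s₀ s s₁ : ℝ) (hs₀ : s₀ < s) (hs₁ : s < s₁)
    (q : ℝ≥0∞) (hq : 1 ≤ q) (r : ℝ) (hr : 0 < r)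
    (Φ : (ℕ → E) → (ℕ → F))
    -- Φ maps the ball B_{s,q}(0,r) into Σ^{s₀}_∞(F)
    (hΦmem : ∀ v, memSigma NE s q v → sigmaNorm NE s q v < ENNReal.ofReal r →
      memSigma NF s₀ ⊤ (Φ v))
    -- weak Lipschitz estimate
    (C₀ : ℝ) (hC₀ : 0 < C₀)
    (hlip : ∀ v w, memSigma NE s q v → sigmaNorm NE s q v < ENNReal.ofReal r →
      memSigma NE s q w → sigmaNorm NE s q w < ENNReal.ofReal r →
      sigmaNorm NF s₀ ⊤ (Φ v - Φ w) ≤ ENNReal.ofReal C₀ * sigmaNorm NE s₀ 1 (v - w))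
    -- tame estimate, for v ∈ Σ^∞_1(E) ∩ B_{s,q}(0,r)
    (C₁ : ℝ) (hC₁ : 0 < C₁)
    (htame : ∀ v, (∀ σ : ℝ, memSigma NE σ 1 v) →
      memSigma NE s q v → sigmaNorm NE s q v < ENNReal.ofReal r →
      sigmaNorm NF s₁ ⊤ (Φ v) ≤ ENNReal.ofReal C₁ * sigmaNorm NE s₁ 1 v) :
    ∀ v, memSigma NE s q v → sigmaNorm NE s q v < ENNReal.ofReal r →
      memSigma NF s q (Φ v) := by
  intro v hv hvlt
  classical
  have h2 : (0:ℝ) < 2 := two_pos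
  have hNE0 : NE (0:E) = 0 := (hNE.eq_zero_iff 0).2 rfl
  have hpow_pos : ∀ x : ℝ, (0:ℝ) < (2:ℝ) ^ x := fun x => Real.rpow_pos_of_pos h2 x
  set t : ℝ := (2:ℝ) ^ (s₀ - s) with ht_def
  set u : ℝ := (2:ℝ) ^ (s - s₁) with hu_def
  have ht0 : 0 ≤ t := (hpow_pos _).le
  have hu0 : 0 ≤ u := (hpow_pos _).le
  have ht1 : t < 1 := Real.rpow_lt_one_of_one_lt_of_neg one_lt_two (by linarith)
  have hu1 : u < 1 := Real.rpow_lt_one_of_one_lt_of_neg one_lt_two (by linarith)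
  set t' : ℝ≥0∞ := ENNReal.ofReal t with ht'_def
  set u' : ℝ≥0∞ := ENNReal.ofReal u with hu'_def
  have ht'1 : t' < 1 := by
    rw [ht'_def, ← ENNReal.ofReal_one]
    exact (ENNReal.ofReal_lt_ofReal_iff_of_nonneg ht0).2 ht1
  have hu'1 : u' < 1 := by
    rw [hu'_def, ← ENNReal.ofReal_one]
    exact (ENNReal.ofReal_lt_ofReal_iff_of_nonneg hu0).2 hu1
  set c₀ : ℝ≥0∞ := ENNReal.ofReal C₀ with hc₀_def
  set c₁ : ℝ≥0∞ := ENNReal.ofReal C₁ with hc₁_def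
  have hc₀0 : c₀ ≠ 0 := by rw [hc₀_def]; simp [ENNReal.ofReal_eq_zero, not_le, hC₀]
  have hc₁top : c₁ ≠ ⊤ := by rw [hc₁_def]; exact ENNReal.ofReal_ne_top
  set A : ℕ → ℝ≥0∞ := fun k => ENNReal.ofReal ((2:ℝ) ^ ((k:ℝ) * s) * NE (v k)) with hA_def
  set K : ℕ → ℕ → ℝ≥0∞ :=
    fun n k => if n < k then c₀ * t' ^ (k - n) else c₁ * u' ^ (n - k) with hK_def
  set M : ℝ≥0∞ := c₀ * (1 - t')⁻¹ + c₁ * (1 - u')⁻¹ with hM_def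
  have h1t'top : (1 - t') ≠ ⊤ := ne_top_of_le_ne_top ENNReal.one_ne_top tsub_le_self
  have h1u'top : (1 - u') ≠ ⊤ := ne_top_of_le_ne_top ENNReal.one_ne_top tsub_le_self
  have h1t' : (1 - t')⁻¹ ≠ ⊤ := ENNReal.inv_ne_top.2 (tsub_pos_of_lt ht'1).ne'
  have h1u' : (1 - u')⁻¹ ≠ ⊤ := ENNReal.inv_ne_top.2 (tsub_pos_of_lt hu'1).ne'
  have hM_ne_top : M ≠ ⊤ := by
    rw [hM_def]
    exact ENNReal.add_ne_top.2 ⟨ENNReal.mul_ne_top (by rw [hc₀_def]; exact ENNReal.ofReal_ne_top)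
      h1t', ENNReal.mul_ne_top hc₁top h1u'⟩
  have hM_ne_zero : M ≠ 0 := by
    rw [hM_def]
    exact (lt_of_lt_of_le (ENNReal.mul_pos hc₀0 (ENNReal.inv_ne_zero.2 h1t'top)) le_self_add).ne'
  have hKsplit : ∀ n k : ℕ, K n k = c₀ * (if n < k then t' ^ (k - n) else 0)
      + c₁ * (if k ≤ n then u' ^ (n - k) else 0) := by
    intro n k
    simp only [hK_def]
    by_cases hk : n < k
    · simp [hk, Nat.not_le.2 hk]
    · simp [hk, Nat.le_of_not_lt hk]
  have hrow : ∀ n, ∑' k, K n k ≤ M := by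
    intro n
    calc ∑' k, K n k
        = c₀ * (∑' k, if n < k then t' ^ (k - n) else 0)
          + c₁ * (∑' k, if k ≤ n then u' ^ (n - k) else 0) := by
          rw [← ENNReal.tsum_mul_left, ← ENNReal.tsum_mul_left, ← ENNReal.tsum_add]
          exact tsum_congr (hKsplit n)
      _ ≤ c₀ * (1 - t')⁻¹ + c₁ * (1 - u')⁻¹ :=
          add_le_add
            (mul_le_mul_right (tsum_ite_pow_le t' _ _ (fun a b ha hb hab => by omega)) _)
            (mul_le_mul_right (tsum_ite_pow_le u' _ _ (fun a b ha hb hab => by omega)) _)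
      _ = M := hM_def.symm
  have hcol : ∀ k, ∑' n, K n k ≤ M := by
    intro k
    calc ∑' n, K n k
        = c₀ * (∑' n, if n < k then t' ^ (k - n) else 0)
          + c₁ * (∑' n, if k ≤ n then u' ^ (n - k) else 0) := by
          rw [← ENNReal.tsum_mul_left, ← ENNReal.tsum_mul_left, ← ENNReal.tsum_add]
          exact tsum_congr fun n => hKsplit n k
      _ ≤ c₀ * (1 - t')⁻¹ + c₁ * (1 - u')⁻¹ :=
          add_le_add
            (mul_le_mul_right (tsum_ite_pow_le t' _ _ (fun a b ha hb hab => by omega)) _)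
            (mul_le_mul_right (tsum_ite_pow_le u' _ _ (fun a b ha hb hab => by omega)) _)
      _ = M := hM_def.symm
  -- facts about the truncations
  have hNEw : ∀ n k : ℕ, NE (smoothS n v k) = if k ≤ n then NE (v k) else 0 := by
    intro n k
    by_cases hk : k ≤ n <;> simp [smoothS, hk, hNE0]
  have hwle : ∀ n, sigmaNorm NE s q (smoothS n v) ≤ sigmaNorm NE s q v := by
    intro n
    have hterm : ∀ k : ℕ, ENNReal.ofReal ((2:ℝ) ^ ((k:ℝ) * s) * NE (smoothS n v k))
        ≤ ENNReal.ofReal ((2:ℝ) ^ ((k:ℝ) * s) * NE (v k)) := by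
      intro k
      refine ENNReal.ofReal_le_ofReal (mul_le_mul_of_nonneg_left ?_ (hpow_pos _).le)
      rw [hNEw n k]
      by_cases hk : k ≤ n
      · simp [hk]
      · simp only [if_neg hk]
        exact hNE.nonneg _
    rw [sigmaNorm, sigmaNorm]
    split_ifs with hq'
    · exact iSup_mono hterm
    · exact ENNReal.rpow_le_rpow (ENNReal.tsum_le_tsum fun k =>
        ENNReal.rpow_le_rpow (hterm k) ENNReal.toReal_nonneg)
        (by positivity)
  have hwlt : ∀ n, sigmaNorm NE s q (smoothS n v) < ENNReal.ofReal r :=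
    fun n => lt_of_le_of_lt (hwle n) hvlt
  have hwmem : ∀ n, memSigma NE s q (smoothS n v) := by
    intro n
    rw [memSigma]
    split_ifs with hq'
    · have hev : (fun _ : ℕ => (0:ℝ)) =ᶠ[atTop]
          fun k : ℕ => (2:ℝ) ^ ((k:ℝ) * s) * NE (smoothS n v k) := by
        filter_upwards [eventually_ge_atTop (n+1)] with k hk
        rw [hNEw n k, if_neg (by omega), mul_zero]
      exact tendsto_const_nhds.congr' hev
    · exact lt_of_lt_of_le (hwlt n) le_top
  have hsig1w : ∀ (n : ℕ) (σ : ℝ), memSigma NE σ 1 (smoothS n v) := by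
    intro n σ
    rw [memSigma, if_neg ENNReal.one_ne_top, sigmaNorm_one_eq]
    rw [tsum_eq_sum (s := Finset.range (n+1)) (by
      intro k hk
      rw [hNEw n k, if_neg (by simp at hk; omega), mul_zero, ENNReal.ofReal_zero])]
    exact ENNReal.sum_lt_top.2 fun k _ => ENNReal.ofReal_lt_top
  have hg₀ : ∀ n, sigmaNorm NE s₀ 1 (v - smoothS n v)
      = ∑' k : ℕ, (if k ≤ n then 0
        else ENNReal.ofReal ((2:ℝ) ^ ((k:ℝ) * s₀) * NE (v k))) := by
    intro n
    rw [sigmaNorm_one_eq]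
    refine tsum_congr fun k => ?_
    have hvw : (v - smoothS n v) k = if k ≤ n then 0 else v k := by
      by_cases hk : k ≤ n <;> simp [smoothS, hk]
    rw [hvw]
    by_cases hk : k ≤ n <;> simp [hk, hNE0]
  have hg₁ : ∀ n, sigmaNorm NE s₁ 1 (smoothS n v)
      = ∑' k : ℕ, (if k ≤ n then ENNReal.ofReal ((2:ℝ) ^ ((k:ℝ) * s₁) * NE (v k)) else 0) := by
    intro n
    rw [sigmaNorm_one_eq]
    refine tsum_congr fun k => ?_
    rw [hNEw n k]
    by_cases hk : k ≤ n <;> simp [hk]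
  -- the key pointwise estimate
  have hkey : ∀ n : ℕ, ENNReal.ofReal ((2:ℝ) ^ ((n:ℝ) * s) * NF (Φ v n))
      ≤ ∑' k, K n k * A k := by
    intro n
    have h1 := hlip v (smoothS n v) hv hvlt (hwmem n) (hwlt n)
    have h2' := htame (smoothS n v) (hsig1w n) (hwmem n) (hwlt n)
    rw [hg₀ n] at h1
    rw [hg₁ n] at h2'
    have h1n : ENNReal.ofReal ((2:ℝ) ^ ((n:ℝ) * s₀) * NF ((Φ v - Φ (smoothS n v)) n))
        ≤ c₀ * ∑' k : ℕ, (if k ≤ n then 0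
          else ENNReal.ofReal ((2:ℝ) ^ ((k:ℝ) * s₀) * NE (v k))) := by
      refine le_trans ?_ h1
      rw [sigmaNorm_top_eq]
      exact le_iSup (fun k : ℕ =>
        ENNReal.ofReal ((2:ℝ) ^ ((k:ℝ) * s₀) * NF ((Φ v - Φ (smoothS n v)) k))) n
    have h2n : ENNReal.ofReal ((2:ℝ) ^ ((n:ℝ) * s₁) * NF (Φ (smoothS n v) n))
        ≤ c₁ * ∑' k : ℕ, (if k ≤ n
          then ENNReal.ofReal ((2:ℝ) ^ ((k:ℝ) * s₁) * NE (v k)) else 0) := by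
      refine le_trans ?_ h2'
      rw [sigmaNorm_top_eq]
      exact le_iSup (fun k : ℕ =>
        ENNReal.ofReal ((2:ℝ) ^ ((k:ℝ) * s₁) * NF (Φ (smoothS n v) k))) n
    have e1 : ENNReal.ofReal ((2:ℝ) ^ ((n:ℝ) * s) * NF ((Φ v - Φ (smoothS n v)) n))
        ≤ ∑' k : ℕ, (if n < k then (c₀ * t' ^ (k - n)) * A k else 0) := by
      have hrs : (2:ℝ) ^ ((n:ℝ) * s) * NF ((Φ v - Φ (smoothS n v)) n)
          = (2:ℝ) ^ ((n:ℝ) * (s - s₀))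
            * ((2:ℝ) ^ ((n:ℝ) * s₀) * NF ((Φ v - Φ (smoothS n v)) n)) := by
        rw [← mul_assoc, ← Real.rpow_add h2]
        ring_nf
      rw [hrs, ENNReal.ofReal_mul (hpow_pos _).le]
      calc ENNReal.ofReal ((2:ℝ) ^ ((n:ℝ) * (s - s₀)))
            * ENNReal.ofReal ((2:ℝ) ^ ((n:ℝ) * s₀) * NF ((Φ v - Φ (smoothS n v)) n))
          ≤ ENNReal.ofReal ((2:ℝ) ^ ((n:ℝ) * (s - s₀)))
            * (c₀ * ∑' k : ℕ, (if k ≤ n then 0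
              else ENNReal.ofReal ((2:ℝ) ^ ((k:ℝ) * s₀) * NE (v k)))) := mul_le_mul_right h1n _
        _ = ∑' k : ℕ, ENNReal.ofReal ((2:ℝ) ^ ((n:ℝ) * (s - s₀)))
            * (c₀ * (if k ≤ n then 0
              else ENNReal.ofReal ((2:ℝ) ^ ((k:ℝ) * s₀) * NE (v k)))) := by
            rw [ENNReal.tsum_mul_left, ENNReal.tsum_mul_left]
        _ = ∑' k : ℕ, (if n < k then (c₀ * t' ^ (k - n)) * A k else 0) := by
            refine tsum_congr fun k => ?_
            by_cases hk : k ≤ n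
            · simp [hk, Nat.not_lt.2 hk]
            · have hk' : n < k := Nat.lt_of_not_le hk
              rw [if_neg hk, if_pos hk']
              have hreal : (2:ℝ) ^ ((n:ℝ) * (s - s₀)) * ((2:ℝ) ^ ((k:ℝ) * s₀) * NE (v k))
                  = t ^ (k - n) * ((2:ℝ) ^ ((k:ℝ) * s) * NE (v k)) := by
                rw [← mul_assoc, rpow_split₁ s s₀ n k hk'.le, ht_def, mul_assoc]
              calc ENNReal.ofReal ((2:ℝ) ^ ((n:ℝ) * (s - s₀)))
                    * (c₀ * ENNReal.ofReal ((2:ℝ) ^ ((k:ℝ) * s₀) * NE (v k)))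
                  = c₀ * (ENNReal.ofReal ((2:ℝ) ^ ((n:ℝ) * (s - s₀)))
                    * ENNReal.ofReal ((2:ℝ) ^ ((k:ℝ) * s₀) * NE (v k))) := by ring
                _ = c₀ * ENNReal.ofReal ((2:ℝ) ^ ((n:ℝ) * (s - s₀))
                    * ((2:ℝ) ^ ((k:ℝ) * s₀) * NE (v k))) := by
                    rw [← ENNReal.ofReal_mul (hpow_pos _).le]
                _ = c₀ * (t' ^ (k - n) * A k) := by
                    rw [hreal, ENNReal.ofReal_mul (pow_nonneg ht0 _), ht'_def,
                      ← ENNReal.ofReal_pow ht0, hA_def]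
                _ = (c₀ * t' ^ (k - n)) * A k := by ring
    have e2 : ENNReal.ofReal ((2:ℝ) ^ ((n:ℝ) * s) * NF (Φ (smoothS n v) n))
        ≤ ∑' k : ℕ, (if k ≤ n then (c₁ * u' ^ (n - k)) * A k else 0) := by
      have hrs : (2:ℝ) ^ ((n:ℝ) * s) * NF (Φ (smoothS n v) n)
          = (2:ℝ) ^ ((n:ℝ) * (s - s₁))
            * ((2:ℝ) ^ ((n:ℝ) * s₁) * NF (Φ (smoothS n v) n)) := by
        rw [← mul_assoc, ← Real.rpow_add h2]
        ring_nf
      rw [hrs, ENNReal.ofReal_mul (hpow_pos _).le]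
      calc ENNReal.ofReal ((2:ℝ) ^ ((n:ℝ) * (s - s₁)))
            * ENNReal.ofReal ((2:ℝ) ^ ((n:ℝ) * s₁) * NF (Φ (smoothS n v) n))
          ≤ ENNReal.ofReal ((2:ℝ) ^ ((n:ℝ) * (s - s₁)))
            * (c₁ * ∑' k : ℕ, (if k ≤ n
              then ENNReal.ofReal ((2:ℝ) ^ ((k:ℝ) * s₁) * NE (v k)) else 0)) :=
            mul_le_mul_right h2n _
        _ = ∑' k : ℕ, ENNReal.ofReal ((2:ℝ) ^ ((n:ℝ) * (s - s₁)))
            * (c₁ * (if k ≤ n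
              then ENNReal.ofReal ((2:ℝ) ^ ((k:ℝ) * s₁) * NE (v k)) else 0)) := by
            rw [ENNReal.tsum_mul_left, ENNReal.tsum_mul_left]
        _ = ∑' k : ℕ, (if k ≤ n then (c₁ * u' ^ (n - k)) * A k else 0) := by
            refine tsum_congr fun k => ?_
            by_cases hk : k ≤ n
            · rw [if_pos hk, if_pos hk]
              have hreal : (2:ℝ) ^ ((n:ℝ) * (s - s₁)) * ((2:ℝ) ^ ((k:ℝ) * s₁) * NE (v k))
                  = u ^ (n - k) * ((2:ℝ) ^ ((k:ℝ) * s) * NE (v k)) := by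
                rw [← mul_assoc, rpow_split₂ s s₁ n k hk, hu_def, mul_assoc]
              calc ENNReal.ofReal ((2:ℝ) ^ ((n:ℝ) * (s - s₁)))
                    * (c₁ * ENNReal.ofReal ((2:ℝ) ^ ((k:ℝ) * s₁) * NE (v k)))
                  = c₁ * (ENNReal.ofReal ((2:ℝ) ^ ((n:ℝ) * (s - s₁)))
                    * ENNReal.ofReal ((2:ℝ) ^ ((k:ℝ) * s₁) * NE (v k))) := by ring
                _ = c₁ * ENNReal.ofReal ((2:ℝ) ^ ((n:ℝ) * (s - s₁))
                    * ((2:ℝ) ^ ((k:ℝ) * s₁) * NE (v k))) := by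
                    rw [← ENNReal.ofReal_mul (hpow_pos _).le]
                _ = c₁ * (u' ^ (n - k) * A k) := by
                    rw [hreal, ENNReal.ofReal_mul (pow_nonneg hu0 _), hu'_def,
                      ← ENNReal.ofReal_pow hu0, hA_def]
                _ = (c₁ * u' ^ (n - k)) * A k := by ring
            · simp [hk]
    have htri : NF (Φ v n) ≤ NF ((Φ v - Φ (smoothS n v)) n) + NF (Φ (smoothS n v) n) := by
      have heq : Φ v n - Φ (smoothS n v) n + Φ (smoothS n v) n = Φ v n := by abel
      have h := hNF.add_le (Φ v n - Φ (smoothS n v) n) (Φ (smoothS n v) n)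
      rw [heq] at h
      simpa [Pi.sub_apply] using h
    calc ENNReal.ofReal ((2:ℝ) ^ ((n:ℝ) * s) * NF (Φ v n))
        ≤ ENNReal.ofReal ((2:ℝ) ^ ((n:ℝ) * s)
            * (NF ((Φ v - Φ (smoothS n v)) n) + NF (Φ (smoothS n v) n))) :=
          ENNReal.ofReal_le_ofReal (mul_le_mul_of_nonneg_left htri (hpow_pos _).le)
      _ = ENNReal.ofReal ((2:ℝ) ^ ((n:ℝ) * s) * NF ((Φ v - Φ (smoothS n v)) n))
          + ENNReal.ofReal ((2:ℝ) ^ ((n:ℝ) * s) * NF (Φ (smoothS n v) n)) := by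
          rw [mul_add, ENNReal.ofReal_add (mul_nonneg (hpow_pos _).le (hNF.nonneg _))
            (mul_nonneg (hpow_pos _).le (hNF.nonneg _))]
      _ ≤ (∑' k : ℕ, (if n < k then (c₀ * t' ^ (k - n)) * A k else 0))
          + ∑' k : ℕ, (if k ≤ n then (c₁ * u' ^ (n - k)) * A k else 0) := add_le_add e1 e2
      _ = ∑' k, K n k * A k := by
          rw [← ENNReal.tsum_add]
          refine tsum_congr fun k => ?_
          by_cases hk : n < k
          · rw [if_pos hk, if_neg (Nat.not_le.2 hk), add_zero]
            simp only [hK_def, if_pos hk]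
          · rw [if_neg hk, if_pos (Nat.le_of_not_lt hk), zero_add]
            simp only [hK_def, if_neg hk]
  -- conclusion
  rw [memSigma]
  by_cases hq' : q = ⊤
  · subst hq'
    rw [if_pos rfl]
    rw [memSigma, if_pos rfl] at hv
    rw [sigmaNorm, if_pos rfl] at hvlt
    have hA0 : Tendsto A atTop (nhds 0) := by
      rw [hA_def]
      simpa using ENNReal.tendsto_ofReal hv
    have hAb : ∀ k, A k ≤ ENNReal.ofReal r := by
      intro k
      rw [hA_def]
      exact le_of_lt (lt_of_le_of_lt (le_iSup (fun k : ℕ =>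
        ENNReal.ofReal ((2:ℝ) ^ ((k:ℝ) * s) * NE (v k))) k) hvlt)
    have hcolK : ∀ k, Tendsto (fun n => K n k) atTop (nhds 0) := by
      intro k
      have h0 : Tendsto (fun n : ℕ => c₁ * u' ^ (n - k)) atTop (nhds 0) := by
        have := ENNReal.Tendsto.const_mul (a := c₁)
          ((ENNReal.tendsto_pow_atTop_nhds_zero_of_lt_one hu'1).comp (tendsto_sub_atTop_nat k))
          (Or.inr hc₁top)
        simpa [Function.comp] using this
      refine h0.congr' ?_
      filter_upwards [eventually_ge_atTop k] with n hn
      simp only [hK_def]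
      rw [if_neg (Nat.not_lt.2 hn)]
    have hB : Tendsto (fun n => ∑' k, K n k * A k) atTop (nhds 0) :=
      tendsto_kernel K A M (ENNReal.ofReal r) hM_ne_top ENNReal.ofReal_ne_top hrow hcolK hAb hA0
    have hB2 : Tendsto (fun n : ℕ => ENNReal.ofReal ((2:ℝ) ^ ((n:ℝ) * s) * NF (Φ v n)))
        atTop (nhds 0) :=
      tendsto_of_tendsto_of_tendsto_of_le_of_le tendsto_const_nhds hB (fun n => zero_le) hkey
    have htr := (ENNReal.tendsto_toReal (a := 0) (by simp)).comp hB2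
    simp only [Function.comp, ENNReal.toReal_zero] at htr
    refine htr.congr fun n => ?_
    exact ENNReal.toReal_ofReal (mul_nonneg (hpow_pos _).le (hNF.nonneg _))
  · rw [if_neg hq']
    rw [memSigma, if_neg hq'] at hv
    rw [sigmaNorm, if_neg hq'] at hv ⊢
    have hp1 : (1:ℝ) ≤ q.toReal := by
      have := ENNReal.toReal_mono hq' hq
      simpa using this
    have hp0 : (0:ℝ) < q.toReal := lt_of_lt_of_le one_pos hp1
    have hAp : ∑' k, A k ^ q.toReal < ⊤ := by
      have hfin := (ENNReal.rpow_lt_top_iff_of_pos (by positivity : (0:ℝ) < 1 / q.toReal)).1 hv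
      simpa [hA_def] using hfin
    have hsum : ∑' n : ℕ, ENNReal.ofReal ((2:ℝ) ^ ((n:ℝ) * s) * NF (Φ v n)) ^ q.toReal
        ≤ M ^ q.toReal * ∑' k, A k ^ q.toReal :=
      le_trans (ENNReal.tsum_le_tsum fun n => ENNReal.rpow_le_rpow (hkey n) hp0.le)
        (schur_bound K A M hM_ne_zero hM_ne_top hp1 hrow hcol)
    have hfin2 : ∑' n : ℕ, ENNReal.ofReal ((2:ℝ) ^ ((n:ℝ) * s) * NF (Φ v n)) ^ q.toReal ≠ ⊤ :=
      ne_top_of_le_ne_top (ENNReal.mul_ne_top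
        (ENNReal.rpow_ne_top_of_nonneg hp0.le hM_ne_top) hAp.ne) hsum
    exact ENNReal.rpow_lt_top_of_nonneg (by positivity) hfin2
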